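/- Let n, pS, pF be positive integers with p = pS + pF, p > n, p > 1. Let V be a p × p Haar-distributed orthogonal random matrix, let M = ∑_{k=1}^{n} v_k v_kᵀ (the projection onto the span of the first n columns of V), and let R = [I_{pS}, 0] ∈ ℝ^{pS×p}, R_F = [0, I_{pF}] ∈ ℝ^{pF×p}. Then E[R M R_Fᵀ R_F M Rᵀ] = (n·pF·(p−n))/((p−1)·p·(p+2)) · I_{pS}. -/

import Mathlib

open MeasureTheory Matrix

instance matrixMeasurableSpace (m n : Type*) : MeasurableSpace (Matrix m n ℝ) :=
  inferInstanceAs (MeasurableSpace (m → n → ℝ))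



namespace S18
variable {p : ℕ}
abbrev OG (p : ℕ) := ↥(Matrix.orthogonalGroup (Fin p) ℝ)
def ent (i j : Fin p) (V : OG p) : ℝ := (V : Matrix (Fin p) (Fin p) ℝ) i j

lemma measurable_ent (i j : Fin p) : Measurable (ent i j) :=
  (measurable_pi_apply j).comp ((measurable_pi_apply i).comp measurable_subtype_coe)

lemma meas_prod4 (i a j b k c l d : Fin p) :
    Measurable fun V : OG p => ent i a V * ent j b V * ent k c V * ent l d V :=
  (((measurable_ent i a).mul (measurable_ent j b)).mul (measurable_ent k c)).mul
    (measurable_ent l d)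

lemma row_orthonormal (V : OG p) (i j : Fin p) :
    ∑ k, ent i k V * ent j k V = if i = j then 1 else 0 := by
  have h : (V : Matrix (Fin p) (Fin p) ℝ) * star (V : Matrix (Fin p) (Fin p) ℝ) = 1 :=
    (Matrix.mem_orthogonalGroup_iff (Fin p) ℝ).mp V.2
  have := congrFun (congrFun h i) j
  simpa [Matrix.mul_apply, Matrix.one_apply, ent, Matrix.star_eq_conjTranspose,
    Matrix.conjTranspose_apply] using this

lemma col_orthonormal (V : OG p) (i j : Fin p) :
    ∑ k, ent k i V * ent k j V = if i = j then 1 else 0 := by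
  have h : star (V : Matrix (Fin p) (Fin p) ℝ) * (V : Matrix (Fin p) (Fin p) ℝ) = 1 :=
    (Matrix.mem_orthogonalGroup_iff' (Fin p) ℝ).mp V.2
  have := congrFun (congrFun h i) j
  simpa [Matrix.mul_apply, Matrix.one_apply, ent, Matrix.star_eq_conjTranspose,
    Matrix.conjTranspose_apply] using this

lemma sq_ent_le_one (V : OG p) (i j : Fin p) : ent i j V * ent i j V ≤ 1 := by
  have h : ∑ k, ent i k V * ent i k V = 1 := by simpa using row_orthonormal V i i
  rw [← h]
  exact Finset.single_le_sum (f := fun k => ent i k V * ent i k V)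
    (fun k _ => mul_self_nonneg _) (Finset.mem_univ j)

lemma abs_ent_le_one (V : OG p) (i j : Fin p) : |ent i j V| ≤ 1 := by
  have := sq_ent_le_one V i j
  nlinarith [abs_nonneg (ent i j V), abs_mul_abs_self (ent i j V)]

lemma bound_prod4 (i a j b k c l d : Fin p) (V : OG p) :
    |ent i a V * ent j b V * ent k c V * ent l d V| ≤ 1 := by
  rw [abs_mul, abs_mul, abs_mul]
  have n1 := abs_nonneg (ent i a V); have n2 := abs_nonneg (ent j b V)
  have n3 := abs_nonneg (ent k c V); have n4 := abs_nonneg (ent l d V)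
  have h1 := abs_ent_le_one V i a; have h2 := abs_ent_le_one V j b
  have h3 := abs_ent_le_one V k c; have h4 := abs_ent_le_one V l d
  nlinarith [mul_nonneg n1 n2, mul_nonneg (mul_nonneg n1 n2) n3]

lemma sum_one {a : Fin p} (f : Fin p → ℝ) (hf : ∀ c, c ≠ a → f c = 0) :
    ∑ c, f c = f a :=
  Finset.sum_eq_single a (fun c _ hc => hf c hc) (by simp)

lemma sum_two {r s : Fin p} (hrs : r ≠ s) (f : Fin p → ℝ)
    (hf : ∀ c, c ≠ r → c ≠ s → f c = 0) : ∑ c, f c = f r + f s := by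
  rw [← Finset.sum_subset (Finset.subset_univ {r, s})]
  · rw [Finset.sum_pair hrs]
  · intro c _ hc
    simp only [Finset.mem_insert, Finset.mem_singleton, not_or] at hc
    exact hf c hc.1 hc.2

/-- permutation matrix: row a has a 1 in column σ a. -/
def permG (σ : Equiv.Perm (Fin p)) : OG p :=
  ⟨Matrix.of (fun a b => if b = σ a then (1:ℝ) else 0), by
    rw [Matrix.mem_orthogonalGroup_iff]
    ext a b
    simp only [Matrix.mul_apply, Matrix.star_eq_conjTranspose, Matrix.conjTranspose_apply,
      Matrix.of_apply, star_trivial, Matrix.one_apply]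
    rw [sum_one (a := σ a) _ (fun c hc => by rw [if_neg hc, zero_mul])]
    simp [σ.injective.eq_iff]⟩

lemma ent_permG_mul (σ : Equiv.Perm (Fin p)) (V : OG p) (i j : Fin p) :
    ent i j (permG σ * V) = ent (σ i) j V := by
  show ((permG σ : Matrix (Fin p) (Fin p) ℝ) * (V : Matrix (Fin p) (Fin p) ℝ)) i j = _
  rw [Matrix.mul_apply, sum_one (a := σ i) _
    (fun c hc => by show (if c = σ i then (1:ℝ) else 0) * _ = 0; rw [if_neg hc, zero_mul])]
  simp [permG, ent]

lemma ent_mul_permG (σ : Equiv.Perm (Fin p)) (V : OG p) (i j : Fin p) :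
    ent i j (V * permG σ) = ent i (σ.symm j) V := by
  show ((V : Matrix (Fin p) (Fin p) ℝ) * (permG σ : Matrix (Fin p) (Fin p) ℝ)) i j = _
  rw [Matrix.mul_apply, sum_one (a := σ.symm j) _
    (fun c hc => by
      show _ * (if j = σ c then (1:ℝ) else 0) = 0
      rw [if_neg (fun h => hc (by simp [h])), mul_zero])]
  simp [permG, ent]

/-- sign flip at row r. -/
def flipG (r : Fin p) : OG p :=
  ⟨Matrix.diagonal (fun k => if k = r then (-1:ℝ) else 1), by
    rw [Matrix.mem_orthogonalGroup_iff]
    ext a b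
    simp only [Matrix.star_eq_conjTranspose, Matrix.diagonal_conjTranspose,
      Matrix.diagonal_mul_diagonal, Matrix.one_apply, Matrix.diagonal_apply, star_trivial]
    by_cases hab : a = b
    · subst hab; by_cases har : a = r <;> simp [har]
    · simp [hab]⟩

lemma ent_flipG_mul (r : Fin p) (V : OG p) (i j : Fin p) :
    ent i j (flipG r * V) = (if i = r then -1 else 1) * ent i j V := by
  show ((flipG r : Matrix (Fin p) (Fin p) ℝ) * (V : Matrix (Fin p) (Fin p) ℝ)) i j = _
  rw [Matrix.mul_apply, sum_one (a := i) _
    (fun c hc => by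
      show Matrix.diagonal _ i c * _ = 0
      rw [Matrix.diagonal_apply_ne _ (Ne.symm hc), zero_mul])]
  simp [flipG, ent, Matrix.diagonal_apply]

noncomputable def rotMat (r s : Fin p) : Matrix (Fin p) (Fin p) ℝ :=
  Matrix.of (fun a b =>
      if a = r then (if b = r then (Real.sqrt 2)⁻¹ else if b = s then (Real.sqrt 2)⁻¹ else 0)
      else if a = s then (if b = r then -(Real.sqrt 2)⁻¹ else if b = s then (Real.sqrt 2)⁻¹ else 0)
      else (if b = a then 1 else 0))

lemma rot_support {r s a c : Fin p} (h : a = r ∨ a = s) (hc1 : c ≠ r) (hc2 : c ≠ s) :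
    rotMat r s a c = 0 := by
  unfold rotMat
  simp only [Matrix.of_apply]
  split_ifs <;> simp_all

lemma rot_support' {r s a c : Fin p} (h1 : a ≠ r) (h2 : a ≠ s) (hc : c ≠ a) :
    rotMat r s a c = 0 := by
  unfold rotMat
  simp only [Matrix.of_apply]
  split_ifs <;> simp_all

lemma sqrt2_inv_sq : (Real.sqrt 2)⁻¹ * (Real.sqrt 2)⁻¹ = 2⁻¹ := by
  rw [← mul_inv]; norm_num [Real.mul_self_sqrt]

noncomputable def rotG (r s : Fin p) (hrs : r ≠ s) : OG p :=
  ⟨rotMat r s, by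
    rw [Matrix.mem_orthogonalGroup_iff]
    ext a b
    simp only [Matrix.mul_apply, Matrix.star_eq_conjTranspose, Matrix.conjTranspose_apply,
      star_trivial, Matrix.one_apply, Matrix.transpose_apply]
    by_cases ha : a = r ∨ a = s
    · by_cases hb : b = r ∨ b = s
      · rw [sum_two hrs (f := fun c => rotMat r s a c * rotMat r s b c)
          (fun c hc1 hc2 => by
            show rotMat r s a c * rotMat r s b c = 0
            rw [rot_support ha hc1 hc2, zero_mul])]
        rcases ha with ha | ha <;> rcases hb with hb | hb <;>
          simp [rotMat, ha, hb, hrs, Ne.symm hrs, sqrt2_inv_sq] <;> ring_nf <;>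
          simp [sqrt2_inv_sq] <;> norm_num
      · push_neg at hb
        rw [sum_one (a := b) (f := fun c => rotMat r s a c * rotMat r s b c)
          (fun c hc => by
            show rotMat r s a c * rotMat r s b c = 0
            rw [rot_support' hb.1 hb.2 hc, mul_zero])]
        have hab : ¬ a = b := by
          rcases ha with ha | ha
          · rw [ha]; exact fun h => hb.1 h.symm
          · rw [ha]; exact fun h => hb.2 h.symm
        rw [rot_support ha hb.1 hb.2, zero_mul, if_neg hab]
    · push_neg at ha
      rw [sum_one (a := a) (f := fun c => rotMat r s a c * rotMat r s b c)
        (fun c hc => by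
          show rotMat r s a c * rotMat r s b c = 0
          rw [rot_support' ha.1 ha.2 hc, zero_mul])]
      have h1 : rotMat r s a a = 1 := by unfold rotMat; simp [ha.1, ha.2]
      rw [h1, one_mul]
      by_cases hb : b = r ∨ b = s
      · rw [rot_support hb ha.1 ha.2, if_neg (by
          rcases hb with hb | hb
          · rw [hb]; exact fun h => ha.1 h
          · rw [hb]; exact fun h => ha.2 h)]
      · push_neg at hb
        unfold rotMat
        by_cases hba : a = b
        · simp [hba, hb.1, hb.2]
        · simp [hb.1, hb.2, hba, Ne.symm hba]⟩

lemma coe_rotG (r s : Fin p) (hrs : r ≠ s) :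
    ((rotG r s hrs : OG p) : Matrix (Fin p) (Fin p) ℝ) = rotMat r s := rfl

lemma ent_rotG_mul (r s : Fin p) (hrs : r ≠ s) (V : OG p) (i j : Fin p) :
    ent i j (rotG r s hrs * V) =
      if i = r then (Real.sqrt 2)⁻¹ * (ent r j V + ent s j V)
      else if i = s then (Real.sqrt 2)⁻¹ * (- ent r j V + ent s j V)
      else ent i j V := by
  show ((rotG r s hrs : Matrix (Fin p) (Fin p) ℝ) * (V : Matrix (Fin p) (Fin p) ℝ)) i j = _
  rw [coe_rotG, Matrix.mul_apply]
  by_cases ha : i = r ∨ i = s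
  · rw [sum_two hrs (f := fun c => rotMat r s i c * (V : Matrix (Fin p) (Fin p) ℝ) c j)
      (fun c hc1 hc2 => by
        show rotMat r s i c * (V : Matrix (Fin p) (Fin p) ℝ) c j = 0
        rw [rot_support ha hc1 hc2, zero_mul])]
    rcases ha with ha | ha <;> simp [rotMat, ha, hrs, Ne.symm hrs, ent] <;> ring
  · push_neg at ha
    rw [sum_one (a := i) (f := fun c => rotMat r s i c * (V : Matrix (Fin p) (Fin p) ℝ) c j)
      (fun c hc => by
        show rotMat r s i c * (V : Matrix (Fin p) (Fin p) ℝ) c j = 0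
        rw [rot_support' ha.1 ha.2 hc, zero_mul])]
    have h1 : rotMat r s i i = 1 := by unfold rotMat; simp [ha.1, ha.2]
    rw [h1, one_mul, if_neg ha.1, if_neg ha.2]
    rfl


lemma measurable_mul_left (g : OG p) : Measurable (fun V : OG p => g * V) := by
  apply Measurable.subtype_mk
  show Measurable fun V : OG p => (_ : Matrix (Fin p) (Fin p) ℝ)
  apply measurable_pi_lambda
  intro i
  apply measurable_pi_lambda
  intro j
  simp only [Matrix.mul_apply]
  exact Finset.measurable_sum _ (fun k _ => (measurable_const.mul
    ((measurable_pi_apply j).comp ((measurable_pi_apply k).comp measurable_subtype_coe))))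

lemma measurable_mul_right (g : OG p) : Measurable (fun V : OG p => V * g) := by
  apply Measurable.subtype_mk
  show Measurable fun V : OG p => (_ : Matrix (Fin p) (Fin p) ℝ)
  apply measurable_pi_lambda
  intro i
  apply measurable_pi_lambda
  intro j
  simp only [Matrix.mul_apply]
  exact Finset.measurable_sum _ (fun k _ =>
    ((measurable_ent i k).mul
      measurable_const))

variable (μ : Measure (OG p)) [IsProbabilityMeasure μ]

lemma integral_left_inv (hleft : ∀ g : OG p, μ.map (fun V => g * V) = μ)
    (g : OG p) (f : OG p → ℝ) (hf : AEStronglyMeasurable f μ) :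
    ∫ V, f (g * V) ∂μ = ∫ V, f V ∂μ := by
  conv_rhs => rw [← hleft g]
  rw [integral_map (measurable_mul_left g).aemeasurable]
  rwa [hleft g]

lemma integral_right_inv (hright : ∀ g : OG p, μ.map (fun V => V * g) = μ)
    (g : OG p) (f : OG p → ℝ) (hf : AEStronglyMeasurable f μ) :
    ∫ V, f (V * g) ∂μ = ∫ V, f V ∂μ := by
  conv_rhs => rw [← hright g]
  rw [integral_map (measurable_mul_right g).aemeasurable]
  rwa [hright g]



lemma integrable_prod4 (i a j b k c l d : Fin p) :
    Integrable (fun V : OG p => ent i a V * ent j b V * ent k c V * ent l d V) μ :=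
  (integrable_const (1:ℝ)).mono' (meas_prod4 i a j b k c l d).aestronglyMeasurable
    (Filter.Eventually.of_forall fun V => by
      rw [Real.norm_eq_abs]; exact bound_prod4 i a j b k c l d V)


variable {p : ℕ} (μ : Measure (OG p)) [IsProbabilityMeasure μ]

lemma exists_perm_two {α : Type*} [DecidableEq α] {i j i' j' : α}
    (h : i ≠ j) (h' : i' ≠ j') : ∃ σ : Equiv.Perm α, σ i = i' ∧ σ j = j' := by
  refine ⟨(Equiv.swap i i').trans (Equiv.swap ((Equiv.swap i i') j) j'), ?_, ?_⟩
  · simp only [Equiv.trans_apply, Equiv.swap_apply_left]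
    have h2 : i' ≠ (Equiv.swap i i') j := fun hh =>
      h ((Equiv.swap i i').injective ((Equiv.swap_apply_left i i').trans hh))
    exact Equiv.swap_apply_of_ne_of_ne h2 h'
  · simp only [Equiv.trans_apply, Equiv.swap_apply_left]

lemma ent_conj (σ τ : Equiv.Perm (Fin p)) (V : OG p) (i j : Fin p) :
    ent i j (permG σ * V * permG τ) = ent (σ i) (τ.symm j) V := by
  rw [ent_mul_permG, ent_permG_mul]

lemma integral_perm_conj (hleft : ∀ g : OG p, μ.map (fun V => g * V) = μ)
    (hright : ∀ g : OG p, μ.map (fun V => V * g) = μ)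
    (σ τ : Equiv.Perm (Fin p)) (f : OG p → ℝ) (hf : Measurable f) :
    ∫ V, f (permG σ * V * permG τ) ∂μ = ∫ V, f V ∂μ := by
  have h1 : ∫ V, f (permG σ * V * permG τ) ∂μ = ∫ V, f (permG σ * V) ∂μ := by
    have h := integral_right_inv μ hright (permG τ) (fun W => f (permG σ * W))
      ((hf.comp (measurable_mul_left (permG σ))).aestronglyMeasurable)
    simpa [mul_assoc] using h
  rw [h1]
  exact integral_left_inv μ hleft _ f hf.aestronglyMeasurable

noncomputable def Aint (i k : Fin p) : ℝ :=
  ∫ V, ent i k V * ent i k V * ent i k V * ent i k V ∂μ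
noncomputable def Bint (i j k : Fin p) : ℝ :=
  ∫ V, ent i k V * ent i k V * ent j k V * ent j k V ∂μ
noncomputable def Cint (i j k l : Fin p) : ℝ :=
  ∫ V, ent i k V * ent j k V * ent i l V * ent j l V ∂μ

variable (hleft : ∀ g : OG p, μ.map (fun V => g * V) = μ)
  (hright : ∀ g : OG p, μ.map (fun V => V * g) = μ)

include hleft hright in
lemma Aint_eq (i k i' k' : Fin p) : Aint μ i k = Aint μ i' k' := by
  have h := integral_perm_conj μ hleft hright (Equiv.swap i' i) (Equiv.swap k k')
    (fun V => ent i' k' V * ent i' k' V * ent i' k' V * ent i' k' V)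
    (meas_prod4 i' k' i' k' i' k' i' k')
  unfold Aint
  rw [← h]
  congr 1; funext V
  simp only [ent_conj, Equiv.swap_apply_left, Equiv.swap_apply_right, Equiv.symm_swap]

include hleft hright in
lemma Bint_eq {i j i' j' : Fin p} (k k' : Fin p) (h : i ≠ j) (h' : i' ≠ j') :
    Bint μ i j k = Bint μ i' j' k' := by
  obtain ⟨σ, hσ1, hσ2⟩ := exists_perm_two h' h
  have hint := integral_perm_conj μ hleft hright σ (Equiv.swap k' k)
    (fun V => ent i' k' V * ent i' k' V * ent j' k' V * ent j' k' V)
    (meas_prod4 i' k' i' k' j' k' j' k')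
  unfold Bint
  rw [← hint]
  congr 1; funext V
  simp only [ent_conj, hσ1, hσ2, Equiv.symm_swap, Equiv.swap_apply_left]

include hleft hright in
lemma Cint_eq {i j i' j' k l k' l' : Fin p} (h : i ≠ j) (h' : i' ≠ j')
    (hkl : k ≠ l) (hkl' : k' ≠ l') : Cint μ i j k l = Cint μ i' j' k' l' := by
  obtain ⟨σ, hσ1, hσ2⟩ := exists_perm_two h' h
  obtain ⟨ρ, hρ1, hρ2⟩ := exists_perm_two hkl' hkl
  have hint := integral_perm_conj μ hleft hright σ ρ.symm
    (fun V => ent i' k' V * ent j' k' V * ent i' l' V * ent j' l' V)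
    (meas_prod4 i' k' j' k' i' l' j' l')
  unfold Cint
  rw [← hint]
  congr 1; funext V
  simp only [ent_conj, hσ1, hσ2, Equiv.symm_symm, hρ1, hρ2]

include hleft in
lemma integral_flip_zero (r : Fin p) (f : OG p → ℝ) (hf : Measurable f)
    (hodd : ∀ V, f (flipG r * V) = -f V) : ∫ V, f V ∂μ = 0 := by
  have h := integral_left_inv μ hleft (flipG r) f hf.aestronglyMeasurable
  simp only [hodd, integral_neg] at h
  linarith


lemma sum_ite_diag (p : ℕ) (x y : ℝ) :
    ∑ i : Fin p, ∑ j : Fin p, (if i = j then x else y)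
      = (p:ℝ) * (x + ((p:ℝ) - 1) * y) := by
  have hrow : ∀ i : Fin p, ∑ j : Fin p, (if i = j then x else y) = x + ((p:ℝ)-1) * y := by
    intro i
    calc ∑ j : Fin p, (if i = j then x else y)
        = ∑ j : Fin p, ((if i = j then x - y else 0) + y) := by
          apply Finset.sum_congr rfl; intro j _; by_cases h : i = j <;> simp [h]
      _ = (x - y) + (p:ℝ) * y := by
          rw [Finset.sum_add_distrib, Finset.sum_ite_eq, Finset.sum_const, if_pos (Finset.mem_univ i)]
          simp [Finset.card_univ, nsmul_eq_mul]
      _ = x + ((p:ℝ)-1)*y := by ring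
  rw [Finset.sum_congr rfl (fun i _ => hrow i), Finset.sum_const, Finset.card_univ]
  simp [nsmul_eq_mul]
  ring

include hleft hright in
lemma eqn1 {z0 z1 : Fin p} (h01 : z0 ≠ z1) :
    (p:ℝ) * (Aint μ z0 z0 + ((p:ℝ) - 1) * Bint μ z0 z1 z0) = 1 := by
  have key : ∀ V : OG p, ∑ i : Fin p, ∑ j : Fin p,
      (ent i z0 V * ent i z0 V) * (ent j z0 V * ent j z0 V) = 1 := by
    intro V
    rw [← Finset.sum_mul_sum]
    have h := col_orthonormal V z0 z0
    rw [if_pos rfl] at h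
    rw [h, one_mul]
  have hI : ∀ i j : Fin p, Integrable
      (fun V => (ent i z0 V * ent i z0 V) * (ent j z0 V * ent j z0 V)) μ := fun i j =>
    (integrable_prod4 μ i z0 i z0 j z0 j z0).congr
      (Filter.Eventually.of_forall fun V => by ring)
  have h2 : ∫ V, (∑ i : Fin p, ∑ j : Fin p,
      (ent i z0 V * ent i z0 V) * (ent j z0 V * ent j z0 V)) ∂μ = 1 := by
    simp only [key]; simp
  rw [integral_finset_sum _ (fun i _ => integrable_finset_sum _ (fun j _ => hI i j))] at h2
  simp only [fun i => integral_finset_sum Finset.univ (fun j (_ : j ∈ Finset.univ) => hI i j)] at h2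
  have hval : ∀ i j : Fin p, ∫ V, (ent i z0 V * ent i z0 V) * (ent j z0 V * ent j z0 V) ∂μ
      = if i = j then Aint μ z0 z0 else Bint μ z0 z1 z0 := by
    intro i j
    by_cases hij : i = j
    · subst hij
      rw [if_pos rfl]
      have h4 : (fun V => (ent i z0 V * ent i z0 V) * (ent i z0 V * ent i z0 V))
          = fun V => ent i z0 V * ent i z0 V * ent i z0 V * ent i z0 V := by
        funext V; ring
      rw [h4]
      exact Aint_eq μ hleft hright i z0 z0 z0
    · rw [if_neg hij]
      have h4 : (fun V => (ent i z0 V * ent i z0 V) * (ent j z0 V * ent j z0 V))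
          = fun V => ent i z0 V * ent i z0 V * ent j z0 V * ent j z0 V := by
        funext V; ring
      rw [h4]
      exact Bint_eq μ hleft hright z0 z0 hij h01
  rw [Finset.sum_congr rfl (fun i _ => Finset.sum_congr rfl (fun j _ => hval i j))] at h2
  rw [sum_ite_diag] at h2
  exact h2

include hleft hright in
lemma eqn3 {z0 z1 : Fin p} (h01 : z0 ≠ z1) :
    (p:ℝ) * (Bint μ z0 z1 z0 + ((p:ℝ) - 1) * Cint μ z0 z1 z0 z1) = 0 := by
  have key : ∀ V : OG p, ∑ k : Fin p, ∑ l : Fin p,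
      (ent z0 k V * ent z1 k V) * (ent z0 l V * ent z1 l V) = 0 := by
    intro V
    rw [← Finset.sum_mul_sum]
    have h := row_orthonormal V z0 z1
    rw [if_neg h01] at h
    rw [h, zero_mul]
  have hI : ∀ k l : Fin p, Integrable
      (fun V => (ent z0 k V * ent z1 k V) * (ent z0 l V * ent z1 l V)) μ := fun k l =>
    (integrable_prod4 μ z0 k z1 k z0 l z1 l).congr
      (Filter.Eventually.of_forall fun V => by ring)
  have h2 : ∫ V, (∑ k : Fin p, ∑ l : Fin p,
      (ent z0 k V * ent z1 k V) * (ent z0 l V * ent z1 l V)) ∂μ = 0 := by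
    simp only [key]; simp
  rw [integral_finset_sum _ (fun k _ => integrable_finset_sum _ (fun l _ => hI k l))] at h2
  simp only [fun k => integral_finset_sum Finset.univ (fun l (_ : l ∈ Finset.univ) => hI k l)] at h2
  have hval : ∀ k l : Fin p, ∫ V, (ent z0 k V * ent z1 k V) * (ent z0 l V * ent z1 l V) ∂μ
      = if k = l then Bint μ z0 z1 z0 else Cint μ z0 z1 z0 z1 := by
    intro k l
    by_cases hkl : k = l
    · subst hkl
      rw [if_pos rfl]
      have h4 : (fun V => (ent z0 k V * ent z1 k V) * (ent z0 k V * ent z1 k V))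
          = fun V => ent z0 k V * ent z0 k V * ent z1 k V * ent z1 k V := by
        funext V; ring
      rw [h4]
      exact Bint_eq μ hleft hright k z0 h01 h01
    · rw [if_neg hkl]
      have h4 : (fun V => (ent z0 k V * ent z1 k V) * (ent z0 l V * ent z1 l V))
          = fun V => ent z0 k V * ent z1 k V * ent z0 l V * ent z1 l V := by
        funext V; ring
      rw [h4]
      exact Cint_eq μ hleft hright h01 h01 hkl h01
  rw [Finset.sum_congr rfl (fun k _ => Finset.sum_congr rfl (fun l _ => hval k l))] at h2
  rw [sum_ite_diag] at h2
  exact h2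

lemma quart (u v : ℝ) :
    ((Real.sqrt 2)⁻¹*(u+v))*((Real.sqrt 2)⁻¹*(u+v))*((Real.sqrt 2)⁻¹*(u+v))*((Real.sqrt 2)⁻¹*(u+v))
      = 4⁻¹*(u*u*u*u) + (u*u*u*v) + (3/2)*(u*u*v*v) + (u*v*v*v) + 4⁻¹*(v*v*v*v) := by
  have h2 : (Real.sqrt 2)⁻¹ * (Real.sqrt 2)⁻¹ = 2⁻¹ := sqrt2_inv_sq
  linear_combination (((Real.sqrt 2)⁻¹ * (Real.sqrt 2)⁻¹ + 2⁻¹) * (u+v)^4) * h2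

include hleft hright in
lemma eqn2 {z0 z1 : Fin p} (h01 : z0 ≠ z1) :
    Aint μ z0 z0 = 3 * Bint μ z0 z1 z0 := by
  have hmeas := meas_prod4 (p := p) z0 z0 z0 z0 z0 z0 z0 z0
  have h := integral_left_inv μ hleft (rotG z0 z1 h01)
    (fun V => ent z0 z0 V * ent z0 z0 V * ent z0 z0 V * ent z0 z0 V)
    hmeas.aestronglyMeasurable
  have hrot : ∀ V : OG p, ent z0 z0 (rotG z0 z1 h01 * V)
      = (Real.sqrt 2)⁻¹ * (ent z0 z0 V + ent z1 z0 V) := fun V => by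
    rw [ent_rotG_mul, if_pos rfl]
  have hlhs : ∫ V, (fun V => ent z0 z0 V * ent z0 z0 V * ent z0 z0 V * ent z0 z0 V)
        (rotG z0 z1 h01 * V) ∂μ
      = ∫ V, (4⁻¹*(ent z0 z0 V*ent z0 z0 V*ent z0 z0 V*ent z0 z0 V)
          + (ent z0 z0 V*ent z0 z0 V*ent z0 z0 V*ent z1 z0 V)
          + (3/2)*(ent z0 z0 V*ent z0 z0 V*ent z1 z0 V*ent z1 z0 V)
          + (ent z0 z0 V*ent z1 z0 V*ent z1 z0 V*ent z1 z0 V)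
          + 4⁻¹*(ent z1 z0 V*ent z1 z0 V*ent z1 z0 V*ent z1 z0 V)) ∂μ := by
    congr 1; funext V
    show ent z0 z0 (rotG z0 z1 h01 * V) * ent z0 z0 (rotG z0 z1 h01 * V)
      * ent z0 z0 (rotG z0 z1 h01 * V) * ent z0 z0 (rotG z0 z1 h01 * V) = _
    rw [hrot V, quart]
  have I1 : Integrable (fun V : OG p =>
      4⁻¹*(ent z0 z0 V*ent z0 z0 V*ent z0 z0 V*ent z0 z0 V)) μ :=
    (integrable_prod4 μ z0 z0 z0 z0 z0 z0 z0 z0).const_mul _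
  have I2 : Integrable (fun V : OG p =>
      ent z0 z0 V*ent z0 z0 V*ent z0 z0 V*ent z1 z0 V) μ :=
    integrable_prod4 μ z0 z0 z0 z0 z0 z0 z1 z0
  have I3 : Integrable (fun V : OG p =>
      (3/2)*(ent z0 z0 V*ent z0 z0 V*ent z1 z0 V*ent z1 z0 V)) μ :=
    (integrable_prod4 μ z0 z0 z0 z0 z1 z0 z1 z0).const_mul _
  have I4 : Integrable (fun V : OG p =>
      ent z0 z0 V*ent z1 z0 V*ent z1 z0 V*ent z1 z0 V) μ :=
    integrable_prod4 μ z0 z0 z1 z0 z1 z0 z1 z0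
  have I5 : Integrable (fun V : OG p =>
      4⁻¹*(ent z1 z0 V*ent z1 z0 V*ent z1 z0 V*ent z1 z0 V)) μ :=
    (integrable_prod4 μ z1 z0 z1 z0 z1 z0 z1 z0).const_mul _
  have I12 : Integrable (fun V : OG p =>
      4⁻¹*(ent z0 z0 V*ent z0 z0 V*ent z0 z0 V*ent z0 z0 V)
        + ent z0 z0 V*ent z0 z0 V*ent z0 z0 V*ent z1 z0 V) μ := I1.add I2
  have I123 : Integrable (fun V : OG p =>
      4⁻¹*(ent z0 z0 V*ent z0 z0 V*ent z0 z0 V*ent z0 z0 V)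
        + ent z0 z0 V*ent z0 z0 V*ent z0 z0 V*ent z1 z0 V
        + (3/2)*(ent z0 z0 V*ent z0 z0 V*ent z1 z0 V*ent z1 z0 V)) μ := I12.add I3
  have I1234 : Integrable (fun V : OG p =>
      4⁻¹*(ent z0 z0 V*ent z0 z0 V*ent z0 z0 V*ent z0 z0 V)
        + ent z0 z0 V*ent z0 z0 V*ent z0 z0 V*ent z1 z0 V
        + (3/2)*(ent z0 z0 V*ent z0 z0 V*ent z1 z0 V*ent z1 z0 V)
        + ent z0 z0 V*ent z1 z0 V*ent z1 z0 V*ent z1 z0 V) μ := I123.add I4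
  rw [hlhs, integral_add I1234 I5, integral_add I123 I4, integral_add I12 I3,
    integral_add I1 I2, integral_const_mul, integral_const_mul, integral_const_mul] at h
  have hodd1 : ∫ V, ent z0 z0 V * ent z0 z0 V * ent z0 z0 V * ent z1 z0 V ∂μ = 0 := by
    apply integral_flip_zero μ hleft z1 _ (meas_prod4 z0 z0 z0 z0 z0 z0 z1 z0)
    intro V
    show ent z0 z0 (flipG z1 * V) * ent z0 z0 (flipG z1 * V) * ent z0 z0 (flipG z1 * V)
      * ent z1 z0 (flipG z1 * V) = _
    rw [ent_flipG_mul, ent_flipG_mul z1 V z1 z0, if_neg h01, if_pos rfl]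
    ring
  have hodd2 : ∫ V, ent z0 z0 V * ent z1 z0 V * ent z1 z0 V * ent z1 z0 V ∂μ = 0 := by
    apply integral_flip_zero μ hleft z0 _ (meas_prod4 z0 z0 z1 z0 z1 z0 z1 z0)
    intro V
    show ent z0 z0 (flipG z0 * V) * ent z1 z0 (flipG z0 * V) * ent z1 z0 (flipG z0 * V)
      * ent z1 z0 (flipG z0 * V) = _
    rw [ent_flipG_mul, ent_flipG_mul z0 V z1 z0, if_neg (Ne.symm h01), if_pos rfl]
    ring
  have hy4 : ∫ V, ent z1 z0 V * ent z1 z0 V * ent z1 z0 V * ent z1 z0 V ∂μ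
      = Aint μ z0 z0 := Aint_eq μ hleft hright z1 z0 z0 z0
  rw [hodd1, hodd2, hy4] at h
  have hB : ∫ V, ent z0 z0 V * ent z0 z0 V * ent z1 z0 V * ent z1 z0 V ∂μ
      = Bint μ z0 z1 z0 := rfl
  rw [hB] at h
  have hA : ∫ V, ent z0 z0 V * ent z0 z0 V * ent z0 z0 V * ent z0 z0 V ∂μ
      = Aint μ z0 z0 := rfl
  rw [hA] at h
  linarith
end S18

open S18 in
/-- Lemma 2, second claim (Haar SVD reduction): with `M = ∑_{k<n} v_k v_kᵀ` for a
Haar-distributed `p × p` orthogonal matrix `V`, `R = [I_{pS}, 0]`, `R_F = [0, I_{pF}]`,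
`E[R M R_Fᵀ R_F M Rᵀ] = n·pF·(p−n)/((p−1)p(p+2)) · I_{pS}` (entrywise). -/
theorem stmt18 (n pS pF : ℕ) (hn : 0 < n) (hpS : 0 < pS) (hpF : 0 < pF)
    (p : ℕ) (hp : p = pS + pF) (hnp : n < p) (hp1 : 1 < p)
    (μ : Measure ↥(Matrix.orthogonalGroup (Fin p) ℝ)) [IsProbabilityMeasure μ]
    (hleft : ∀ g : ↥(Matrix.orthogonalGroup (Fin p) ℝ),
      μ.map (fun V => g * V) = μ)
    (hright : ∀ g : ↥(Matrix.orthogonalGroup (Fin p) ℝ),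
      μ.map (fun V => V * g) = μ)
    (R : Matrix (Fin pS) (Fin p) ℝ)
    (hR : ∀ (a : Fin pS) (b : Fin p), R a b = if (b : ℕ) = (a : ℕ) then 1 else 0)
    (RF : Matrix (Fin pF) (Fin p) ℝ)
    (hRF : ∀ (a : Fin pF) (b : Fin p), RF a b = if (b : ℕ) = pS + (a : ℕ) then 1 else 0)
    (M : ↥(Matrix.orthogonalGroup (Fin p) ℝ) → Matrix (Fin p) (Fin p) ℝ)
    (hM : ∀ V, M V = ∑ k : Fin n,
      Matrix.vecMulVec (fun a => (V : Matrix (Fin p) (Fin p) ℝ) a (Fin.castLE hnp.le k))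
        (fun a => (V : Matrix (Fin p) (Fin p) ℝ) a (Fin.castLE hnp.le k)))
    (i j : Fin pS) :
    ∫ V, (R * M V * RFᵀ * RF * M V * Rᵀ) i j ∂μ
      = ((n : ℝ) * pF * ((p : ℝ) - n)) / (((p : ℝ) - 1) * (p : ℝ) * ((p : ℝ) + 2))
          * (1 : Matrix (Fin pS) (Fin pS) ℝ) i j := by
  have hppos : 0 < p := by omega
  let z0 : Fin p := ⟨0, by omega⟩
  let z1 : Fin p := ⟨1, by omega⟩
  have h01 : z0 ≠ z1 := Fin.ne_of_val_ne (by norm_num)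
  let e : Fin pS → Fin p := fun a => ⟨a.1, by omega⟩
  let sF : Fin pF → Fin p := fun a => ⟨pS + a.1, by omega⟩
  let ck : Fin n → Fin p := Fin.castLE hnp.le
  have hes : ∀ (a : Fin pS) (d : Fin pF), e a ≠ sF d := fun a d =>
    Fin.ne_of_val_ne (by have := a.isLt; simp only [e, sF]; omega)
  have hckne : ∀ {k l : Fin n}, k ≠ l → ck k ≠ ck l := fun {k l} hkl h =>
    hkl (Fin.ext (by simpa [ck] using congrArg Fin.val h))
  have hM' : ∀ (V : S18.OG p) (x y : Fin p),
      M V x y = ∑ k : Fin n, ent x (ck k) V * ent y (ck k) V := by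
    intro V x y
    rw [hM V, Matrix.sum_apply]
    exact Finset.sum_congr rfl fun k _ => by
      simp [Matrix.vecMulVec_apply, S18.ent, ck]
  have hR2 : ∀ a b, R a b = if b = e a then 1 else 0 := by
    intro a b; rw [hR]; congr 1
    simp [Fin.ext_iff, e]
  have hRF2 : ∀ a b, RF a b = if b = sF a then 1 else 0 := by
    intro a b; rw [hRF]; congr 1
    simp [Fin.ext_iff, sF]
  have hentry : ∀ V : S18.OG p, (R * M V * RFᵀ * RF * M V * Rᵀ) i j
      = ∑ d : Fin pF, M V (e i) (sF d) * M V (sF d) (e j) := by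
    intro V
    have st1 : ∀ (X : Matrix (Fin pS) (Fin p) ℝ), (X * Rᵀ) i j = X i (e j) := by
      intro X
      rw [Matrix.mul_apply, S18.sum_one (a := e j) _ (fun c hc => by
        rw [Matrix.transpose_apply, hR2, if_neg hc, mul_zero])]
      rw [Matrix.transpose_apply, hR2, if_pos rfl, mul_one]
    have st2 : ∀ (X : Matrix (Fin p) (Fin p) ℝ) (c : Fin p), (R * X) i c = X (e i) c := by
      intro X c
      rw [Matrix.mul_apply, S18.sum_one (a := e i) _ (fun c' hc => by
        rw [hR2, if_neg hc, zero_mul])]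
      rw [hR2, if_pos rfl, one_mul]
    have st3 : ∀ (X : Matrix (Fin pS) (Fin p) ℝ) (d : Fin pF),
        (X * RFᵀ) i d = X i (sF d) := by
      intro X d
      rw [Matrix.mul_apply, S18.sum_one (a := sF d) _ (fun c hc => by
        rw [Matrix.transpose_apply, hRF2, if_neg hc, mul_zero])]
      rw [Matrix.transpose_apply, hRF2, if_pos rfl, mul_one]
    have st4 : ∀ c : Fin p, (R * M V * RFᵀ * RF) i c
        = ∑ d : Fin pF, (if c = sF d then 1 else 0) * M V (e i) (sF d) := by
      intro c
      rw [Matrix.mul_apply]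
      refine Finset.sum_congr rfl fun d _ => ?_
      rw [st3, st2, hRF2, mul_comm]
    rw [st1, Matrix.mul_apply]
    calc ∑ c, (R * M V * RFᵀ * RF) i c * M V c (e j)
        = ∑ c, ∑ d : Fin pF, ((if c = sF d then 1 else 0) * M V (e i) (sF d)) * M V c (e j) := by
          refine Finset.sum_congr rfl fun c _ => ?_
          rw [st4, Finset.sum_mul]
      _ = ∑ d : Fin pF, ∑ c, ((if c = sF d then 1 else 0) * M V (e i) (sF d)) * M V c (e j) :=
          Finset.sum_comm
      _ = ∑ d : Fin pF, M V (e i) (sF d) * M V (sF d) (e j) := by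
          refine Finset.sum_congr rfl fun d _ => ?_
          rw [S18.sum_one (a := sF d) _ (fun c hc => by rw [if_neg hc, zero_mul, zero_mul]),
            if_pos rfl, one_mul]
  have hentry2 : ∀ V : S18.OG p, (R * M V * RFᵀ * RF * M V * Rᵀ) i j
      = ∑ d : Fin pF, ∑ k : Fin n, ∑ l : Fin n,
          (ent (e i) (ck k) V * ent (sF d) (ck k) V)
            * (ent (sF d) (ck l) V * ent (e j) (ck l) V) := by
    intro V
    rw [hentry V]
    refine Finset.sum_congr rfl fun d _ => ?_
    rw [hM' V (e i) (sF d), hM' V (sF d) (e j), Finset.sum_mul_sum]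
  have hInt : ∀ (d : Fin pF) (k l : Fin n), Integrable (fun V : S18.OG p =>
      (ent (e i) (ck k) V * ent (sF d) (ck k) V)
        * (ent (sF d) (ck l) V * ent (e j) (ck l) V)) μ := fun d k l =>
    (integrable_prod4 μ (e i) (ck k) (sF d) (ck k) (sF d) (ck l) (e j) (ck l)).congr
      (Filter.Eventually.of_forall fun V => by ring)
  have hsplit : ∫ V, (R * M V * RFᵀ * RF * M V * Rᵀ) i j ∂μ
      = ∑ d : Fin pF, ∑ k : Fin n, ∑ l : Fin n, ∫ V,
          (ent (e i) (ck k) V * ent (sF d) (ck k) V)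
            * (ent (sF d) (ck l) V * ent (e j) (ck l) V) ∂μ := by
    simp only [hentry2]
    rw [integral_finset_sum _ (fun d _ => integrable_finset_sum _ (fun k _ =>
      integrable_finset_sum _ (fun l _ => hInt d k l)))]
    simp only [fun d => integral_finset_sum Finset.univ (fun k (_ : k ∈ Finset.univ) =>
        integrable_finset_sum Finset.univ (fun l (_ : l ∈ Finset.univ) => hInt d k l)),
      fun d k => integral_finset_sum Finset.univ
        (fun l (_ : l ∈ Finset.univ) => hInt d k l)]
  rw [hsplit]
  by_cases hij : i = j
  · subst hij
    have hterm : ∀ (d : Fin pF) (k l : Fin n), (∫ V,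
        (ent (e i) (ck k) V * ent (sF d) (ck k) V)
          * (ent (sF d) (ck l) V * ent (e i) (ck l) V) ∂μ)
        = if k = l then Bint μ z0 z1 z0 else Cint μ z0 z1 z0 z1 := by
      intro d k l
      by_cases hkl : k = l
      · subst hkl
        rw [if_pos rfl, show (fun V : S18.OG p =>
            (ent (e i) (ck k) V * ent (sF d) (ck k) V)
              * (ent (sF d) (ck k) V * ent (e i) (ck k) V))
          = fun V => ent (e i) (ck k) V * ent (e i) (ck k) V
              * ent (sF d) (ck k) V * ent (sF d) (ck k) V from funext fun V => by ring]
        exact Bint_eq μ hleft hright (ck k) z0 (hes i d) h01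
      · rw [if_neg hkl, show (fun V : S18.OG p =>
            (ent (e i) (ck k) V * ent (sF d) (ck k) V)
              * (ent (sF d) (ck l) V * ent (e i) (ck l) V))
          = fun V => ent (e i) (ck k) V * ent (sF d) (ck k) V
              * ent (e i) (ck l) V * ent (sF d) (ck l) V from funext fun V => by ring]
        exact Cint_eq μ hleft hright (hes i d) h01 (hckne hkl) h01
    simp only [hterm]
    have hsum : ∑ d : Fin pF, ∑ k : Fin n, ∑ l : Fin n,
        (if k = l then Bint μ z0 z1 z0 else Cint μ z0 z1 z0 z1)
        = (pF : ℝ) * ((n:ℝ) * (Bint μ z0 z1 z0 + ((n:ℝ)-1) * Cint μ z0 z1 z0 z1)) := by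
      rw [Finset.sum_congr rfl (fun d _ => sum_ite_diag n _ _), Finset.sum_const,
        Finset.card_univ]
      simp [nsmul_eq_mul]
    rw [hsum, Matrix.one_apply_eq, mul_one]
    -- arithmetic
    have e1 := eqn1 μ hleft hright h01
    have e2 := eqn2 μ hleft hright h01
    have e3 := eqn3 μ hleft hright h01
    have hP1 : (1:ℝ) < (p:ℝ) := by exact_mod_cast hp1
    have keyB : Bint μ z0 z1 z0 * ((p:ℝ) * ((p:ℝ)+2)) = 1 := by
      linear_combination e1 - (p:ℝ) * e2
    have keyC : Cint μ z0 z1 z0 z1 * (((p:ℝ)-1) * (p:ℝ) * ((p:ℝ)+2)) = -1 := by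
      linear_combination ((p:ℝ)+2) * e3 - keyB
    have hden : (0:ℝ) < (((p:ℝ)-1) * (p:ℝ) * ((p:ℝ)+2)) :=
      mul_pos (mul_pos (by linarith) (by linarith)) (by linarith)
    rw [eq_div_iff (ne_of_gt hden)]
    linear_combination ((n:ℝ)*(pF:ℝ)*((p:ℝ)-1)) * keyB + ((n:ℝ)*(pF:ℝ)*((n:ℝ)-1)) * keyC
  · have hterm0 : ∀ (d : Fin pF) (k l : Fin n), (∫ V,
        (ent (e i) (ck k) V * ent (sF d) (ck k) V)
          * (ent (sF d) (ck l) V * ent (e j) (ck l) V) ∂μ) = 0 := by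
      intro d k l
      apply integral_flip_zero μ hleft (e i) _
        (((measurable_ent _ _).mul (measurable_ent _ _)).mul
          ((measurable_ent _ _).mul (measurable_ent _ _)))
      intro V
      show (ent (e i) (ck k) (flipG (e i) * V) * ent (sF d) (ck k) (flipG (e i) * V))
          * (ent (sF d) (ck l) (flipG (e i) * V) * ent (e j) (ck l) (flipG (e i) * V)) = _
      have c1 : (if e i = e i then (-1:ℝ) else 1) = -1 := if_pos rfl
      have c2 : (if sF d = e i then (-1:ℝ) else 1) = 1 :=
        if_neg (fun h => hes i d h.symm)
      have c3 : (if e j = e i then (-1:ℝ) else 1) = 1 :=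
        if_neg (fun h : e j = e i => hij (by
          have hv : (j:ℕ) = (i:ℕ) := by simpa [e] using congrArg Fin.val h
          exact Fin.ext hv.symm))
      simp only [ent_flipG_mul, c1, c2, c3, eq_self_iff_true, if_true]
      simp only [Pi.mul_apply]
      ring
    simp only [hterm0, Finset.sum_const_zero]
    rw [Matrix.one_apply_ne hij, mul_zero]
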